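/- Let β ∈ ℝ₊^{n−1} with β_2 > 0 and let μ be the counting measure. Then P_β satisfies the partitionwise Pareto property: for every increasing sequence of integers 0 = k_0 < k_1 < … < k_ℓ = n and every profile V = (v¹,…,vᵐ), if for every i ∈ [ℓ] and all j, j' ∈ [m] one has vʲ((k_{i−1}, k_i]) = vʲ'((k_{i−1}, k_i]), then for every i ∈ [ℓ] and every v ∈ P_β(V), v((k_{i−1}, k_i]) = v¹((k_{i−1}, k_i]). -/

import Mathlib

open Finset

noncomputable section

/-- `i >_σ j`: candidate `i` is ranked above candidate `j` by `σ`
(where `σ i` is the candidate in position `i`). -/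
def prefOver {n : ℕ} (σ : Equiv.Perm (Fin n)) (i j : Fin n) : Prop :=
  σ.symm i < σ.symm j

/-- `M(S,σ)`: the set of `>_σ`-maximal elements of `S` (a singleton when `S ≠ ∅`). -/
def bestSet {n : ℕ} (σ : Equiv.Perm (Fin n)) (S : Finset (Fin n)) : Finset (Fin n) :=
  S.filter fun x => ∀ y ∈ S, σ.symm x ≤ σ.symm y

/-- `△_S(σ,π) = M(S,σ) △ M(S,π)`. -/
def topDiff {n : ℕ} (σ π : Equiv.Perm (Fin n)) (S : Finset (Fin n)) : Finset (Fin n) :=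
  symmDiff (bestSet σ S) (bestSet π S)

/-- The `(β,μ)`-top-difference distance; `β i` is the weight of menus of size `i+2`. -/
def dTD (n : ℕ) (β : Fin (n - 1) → ℝ) (μ : Fin n → ℝ)
    (σ π : Equiv.Perm (Fin n)) : ℝ :=
  ∑ S ∈ Finset.univ.filter (fun S : Finset (Fin n) => 2 ≤ S.card),
    (if h : S.card - 2 < n - 1 then β ⟨S.card - 2, h⟩ else 0) *
      ∑ x ∈ topDiff σ π S, μ x

def IsSemimetric {α : Type*} (d : α → α → ℝ) : Prop :=
  (∀ x y, 0 ≤ d x y) ∧ (∀ x y, d x y = d y x) ∧ (∀ x, d x x = 0) ∧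
    (∀ x y z, d x z ≤ d x y + d y z)

def IsMetricFn {α : Type*} (d : α → α → ℝ) : Prop :=
  IsSemimetric d ∧ ∀ x y, d x y = 0 → x = y

/-- Cumulative distance of `σ` to a profile of voters. -/
def dProf (n : ℕ) (β : Fin (n - 1) → ℝ) (μ : Fin n → ℝ)
    (σ : Equiv.Perm (Fin n)) (V : List (Equiv.Perm (Fin n))) : ℝ :=
  (V.map (dTD n β μ σ)).sum

/-- The median preference correspondence `P^μ_β`. -/
def Pmed (n : ℕ) (β : Fin (n - 1) → ℝ) (μ : Fin n → ℝ)
    (V : List (Equiv.Perm (Fin n))) : Set (Equiv.Perm (Fin n)) :=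
  {σ | ∀ τ : Equiv.Perm (Fin n), dProf n β μ σ V ≤ dProf n β μ τ V}

/-- The winner set `W^μ_β`: candidates ranked first by some consensus ranking. -/
def Wmed (n : ℕ) (hn : 0 < n) (β : Fin (n - 1) → ℝ) (μ : Fin n → ℝ)
    (V : List (Equiv.Perm (Fin n))) : Set (Fin n) :=
  {c | ∃ σ ∈ Pmed n β μ V, σ ⟨0, hn⟩ = c}

/-- `σ((a,b])`: the set of candidates in positions `a+1,…,b` of `σ`. -/
def blockSet {n : ℕ} (σ : Equiv.Perm (Fin n)) (a b : ℕ) : Finset (Fin n) :=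
  Finset.univ.filter fun c => a ≤ (σ.symm c : ℕ) ∧ (σ.symm c : ℕ) < b

lemma bestSet_spec {n : ℕ} (σ : Equiv.Perm (Fin n)) (S : Finset (Fin n)) (hS : S.Nonempty) :
    ∃ t, t ∈ S ∧ (∀ z ∈ S, σ.symm t ≤ σ.symm z) ∧ bestSet σ S = {t} := by
  obtain ⟨t, htS, htmin⟩ := S.exists_min_image (fun c => σ.symm c) hS
  refine ⟨t, htS, htmin, ?_⟩
  ext d
  simp only [bestSet, Finset.mem_filter, Finset.mem_singleton]
  constructor
  · rintro ⟨hdS, hd⟩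
    exact σ.symm.injective (le_antisymm (hd t htS) (htmin d hdS))
  · rintro rfl; exact ⟨htS, htmin⟩

lemma card_symmDiff_singleton {α : Type*} [DecidableEq α] (a b : α) :
    (symmDiff ({a} : Finset α) {b}).card = if a = b then 0 else 2 := by
  rcases eq_or_ne a b with rfl | h
  · simp
  · rw [if_neg h]
    have e : symmDiff ({a} : Finset α) {b} = {a, b} := by
      rw [symmDiff_def]
      ext c
      simp only [Finset.sup_eq_union, mem_union, mem_sdiff, mem_singleton, mem_insert]
      constructor
      · rintro (⟨rfl, -⟩ | ⟨rfl, -⟩) <;> simp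
      · rintro (rfl | rfl)
        · exact Or.inl ⟨rfl, h⟩
        · exact Or.inr ⟨rfl, h.symm⟩
    rw [e, Finset.card_pair h]

lemma dTD_swap_lt (n : ℕ) (hn : 2 ≤ n) (β : Fin (n - 1) → ℝ)
    (hβ : ∀ k, 0 ≤ β k) (hβ2 : 0 < β ⟨0, Nat.sub_pos_of_lt hn⟩)
    (Blk : Fin n → ℕ) (u w : Equiv.Perm (Fin n)) (p : ℕ) (hp : p + 1 < n)
    (hvot : ∀ a b : Fin n, Blk a < Blk b → (u.symm a : ℕ) < (u.symm b : ℕ))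
    (hdesc : Blk (w ⟨p + 1, hp⟩) < Blk (w ⟨p, Nat.lt_of_succ_lt hp⟩)) :
    dTD n β (fun _ => 1) (w * Equiv.swap ⟨p, Nat.lt_of_succ_lt hp⟩ ⟨p + 1, hp⟩) u
      < dTD n β (fun _ => 1) w u := by
  set P : Fin n := ⟨p, Nat.lt_of_succ_lt hp⟩ with hPdef
  set Q : Fin n := ⟨p + 1, hp⟩ with hQdef
  set x : Fin n := w Q with hxdef
  set y : Fin n := w P with hydef
  set w' : Equiv.Perm (Fin n) := w * Equiv.swap P Q with hw'def
  have hPQ : P ≠ Q := by simp [hPdef, hQdef, Fin.ext_iff]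
  have hxy : x ≠ y := fun h => hPQ (w.injective h).symm
  have hsymm : ∀ c, w'.symm c = Equiv.swap P Q (w.symm c) := by
    intro c
    have h1 : w'.symm c = (Equiv.swap P Q).symm (w.symm c) := rfl
    rw [h1, Equiv.symm_swap]
  have ny : (w.symm y : ℕ) = p := by rw [hydef, Equiv.symm_apply_apply]
  have nx : (w.symm x : ℕ) = p + 1 := by rw [hxdef, Equiv.symm_apply_apply]
  have ny' : (w'.symm y : ℕ) = p + 1 := by
    rw [hsymm, hydef, Equiv.symm_apply_apply, Equiv.swap_apply_left]
  have nx' : (w'.symm x : ℕ) = p := by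
    rw [hsymm, hxdef, Equiv.symm_apply_apply, Equiv.swap_apply_right]
  have nz' : ∀ c, c ≠ x → c ≠ y → (w'.symm c : ℕ) = (w.symm c : ℕ) := by
    intro c hcx hcy
    rw [hsymm, Equiv.swap_apply_of_ne_of_ne]
    · intro h; exact hcy (by rw [hydef, ← h, Equiv.apply_symm_apply])
    · intro h; exact hcx (by rw [hxdef, ← h, Equiv.apply_symm_apply])
  have nzy : ∀ c, c ≠ y → (w.symm c : ℕ) ≠ p := by
    intro c h hc
    apply h
    have : w.symm c = P := Fin.ext hc
    rw [hydef, ← this, Equiv.apply_symm_apply]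
  have nzx : ∀ c, c ≠ x → (w.symm c : ℕ) ≠ p + 1 := by
    intro c h hc
    apply h
    have : w.symm c = Q := Fin.ext hc
    rw [hxdef, ← this, Equiv.apply_symm_apply]
  have key : ∀ S : Finset (Fin n), 2 ≤ S.card →
      (topDiff w' u S).card ≤ (topDiff w u S).card := by
    intro S hS2
    have hSne : S.Nonempty := Finset.card_pos.1 (by omega)
    obtain ⟨t, htS, htm, htb⟩ := bestSet_spec w S hSne
    obtain ⟨t', ht'S, ht'm, ht'b⟩ := bestSet_spec w' S hSne
    obtain ⟨s, hsS, hsm, hsb⟩ := bestSet_spec u S hSne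
    have uniq' : ∀ c ∈ S, (∀ z ∈ S, (w'.symm c : ℕ) ≤ (w'.symm z : ℕ)) → t' = c := by
      intro c hc hcm
      have hmem : c ∈ bestSet w' S :=
        Finset.mem_filter.2 ⟨hc, fun z hz => Fin.le_def.2 (hcm z hz)⟩
      rw [ht'b] at hmem
      exact (Finset.mem_singleton.1 hmem).symm
    have htmN : ∀ z ∈ S, (w.symm t : ℕ) ≤ (w.symm z : ℕ) := fun z hz => Fin.le_def.1 (htm z hz)
    have hmain : t' = t ∨ (t = y ∧ x ∈ S ∧ t' = x) := by
      by_cases hty : t = y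
      · by_cases hxS : x ∈ S
        · right
          refine ⟨hty, hxS, uniq' x hxS ?_⟩
          intro z hz
          rcases eq_or_ne z x with rfl | hzx
          · exact le_refl _
          rcases eq_or_ne z y with rfl | hzy
          · rw [nx', ny']; omega
          · rw [nx', nz' z hzx hzy]
            have h1 := htmN z hz
            rw [hty, ny] at h1
            omega
        · left
          apply uniq' t htS
          intro z hz
          have hzx : z ≠ x := fun h => hxS (h ▸ hz)
          rcases eq_or_ne z y with rfl | hzy
          · rw [hty]
          · rw [hty, ny', nz' z hzx hzy]
            have h1 := htmN z hz
            rw [hty, ny] at h1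
            have h2 := nzy z hzy
            have h3 := nzx z hzx
            omega
      · left
        apply uniq' t htS
        intro z hz
        by_cases htx : t = x
        · rw [htx, nx']
          rcases eq_or_ne z x with rfl | hzx
          · rw [nx']
          rcases eq_or_ne z y with rfl | hzy
          · rw [ny']; omega
          · rw [nz' z hzx hzy]
            have h1 := htmN z hz
            rw [htx, nx] at h1
            omega
        · rw [nz' t htx hty]
          have h2 := nzy t hty
          have h3 := nzx t htx
          rcases eq_or_ne z x with rfl | hzx
          · rw [nx']
            have h1 := htmN x hz
            rw [nx] at h1
            omega
          rcases eq_or_ne z y with rfl | hzy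
          · rw [ny']
            have h1 := htmN y hz
            rw [ny] at h1
            omega
          · rw [nz' z hzx hzy]
            exact htmN z hz
    rcases hmain with h | ⟨h1, h2, h3⟩
    · simp only [topDiff]
      rw [htb, ht'b, h, hsb]
    · have hsy : s ≠ y := by
        intro hsy
        have hBs : ¬ Blk x < Blk s := by
          intro hB
          have hv := hvot x s hB
          have h4 := Fin.le_def.1 (hsm x h2)
          omega
        apply hBs
        rw [hsy]
        exact hdesc
      simp only [topDiff]
      rw [htb, ht'b, h3, hsb, h1]
      rw [card_symmDiff_singleton, card_symmDiff_singleton]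
      have hys : ¬ (y = s) := fun h => hsy h.symm
      rw [if_neg hys]
      split <;> omega
  -- assemble
  simp only [dTD, Finset.sum_const, nsmul_eq_mul, mul_one]
  apply Finset.sum_lt_sum
  · intro S hSf
    have hS2 : 2 ≤ S.card := (Finset.mem_filter.1 hSf).2
    have hw0 : (0:ℝ) ≤ if h : S.card - 2 < n - 1 then β ⟨S.card - 2, h⟩ else 0 := by
      split
      · exact hβ _
      · exact le_refl 0
    exact mul_le_mul_of_nonneg_left (Nat.cast_le.2 (key S hS2)) hw0
  · have hxS : x ∈ ({x, y} : Finset (Fin n)) := by simp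
    have hyS : y ∈ ({x, y} : Finset (Fin n)) := by simp
    have hcard2 : ({x, y} : Finset (Fin n)).card = 2 := Finset.card_pair hxy
    refine ⟨{x, y}, Finset.mem_filter.2 ⟨Finset.mem_univ _, le_of_eq hcard2.symm⟩, ?_⟩
    have hbw : bestSet w ({x, y} : Finset (Fin n)) = {y} := by
      obtain ⟨t, htS, htm, htb⟩ := bestSet_spec w {x, y} ⟨x, hxS⟩
      have ht : t = y := by
        rcases Finset.mem_insert.1 htS with htx | hty'
        · exfalso
          have h2 := Fin.le_def.1 (htm y hyS)
          rw [htx, nx, ny] at h2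
          omega
        · exact Finset.mem_singleton.1 hty'
      rw [htb, ht]
    have hbw' : bestSet w' ({x, y} : Finset (Fin n)) = {x} := by
      obtain ⟨t, htS, htm, htb⟩ := bestSet_spec w' {x, y} ⟨x, hxS⟩
      have ht : t = x := by
        rcases Finset.mem_insert.1 htS with htx | hty'
        · exact htx
        · have ht' := Finset.mem_singleton.1 hty'
          have h2 := Fin.le_def.1 (htm x hxS)
          rw [ht', nx', ny'] at h2
          omega
      rw [htb, ht]
    have hbu : bestSet u ({x, y} : Finset (Fin n)) = {x} := by
      obtain ⟨t, htS, htm, htb⟩ := bestSet_spec u {x, y} ⟨x, hxS⟩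
      have hux : (u.symm x : ℕ) < u.symm y := hvot x y hdesc
      have ht : t = x := by
        rcases Finset.mem_insert.1 htS with htx | hty'
        · exact htx
        · have ht' := Finset.mem_singleton.1 hty'
          have h2 := Fin.le_def.1 (htm x hxS)
          rw [ht'] at h2
          omega
      rw [htb, ht]
    simp only [topDiff]
    rw [hbw, hbw', hbu]
    rw [card_symmDiff_singleton, card_symmDiff_singleton]
    rw [if_pos rfl, if_neg (fun h => hxy h.symm)]
    have gen : ∀ (m : ℕ), m = 2 →
        (if h : m - 2 < n - 1 then β ⟨m - 2, h⟩ else 0) = β ⟨0, Nat.sub_pos_of_lt hn⟩ := by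
      rintro m rfl
      rw [dif_pos (by omega : 2 - 2 < n - 1)]
    rw [gen _ hcard2]
    have hb : (0:ℝ) < β ⟨0, Nat.sub_pos_of_lt hn⟩ := hβ2
    push_cast
    nlinarith [hb]

theorem stmt16 (n : ℕ) (hn : 2 ≤ n) (β : Fin (n - 1) → ℝ)
    (hβ : ∀ k, 0 ≤ β k) (hβ2 : 0 < β ⟨0, by omega⟩)
    (ℓ : ℕ) (kseq : ℕ → ℕ)
    (hmono : ∀ i, i < ℓ → kseq i < kseq (i + 1))
    (h0 : kseq 0 = 0) (hl : kseq ℓ = n)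
    (v₁ : Equiv.Perm (Fin n)) (V : List (Equiv.Perm (Fin n)))
    (hagree : ∀ i, 1 ≤ i → i ≤ ℓ → ∀ u ∈ v₁ :: V,
      blockSet u (kseq (i - 1)) (kseq i) = blockSet v₁ (kseq (i - 1)) (kseq i)) :
    ∀ i, 1 ≤ i → i ≤ ℓ → ∀ w ∈ Pmed n β (fun _ => (1 : ℝ)) (v₁ :: V),
      blockSet w (kseq (i - 1)) (kseq i) = blockSet v₁ (kseq (i - 1)) (kseq i) := by
  intro i hi1 hiℓ w hw
  have hℓ1 : 1 ≤ ℓ := by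
    rcases Nat.eq_zero_or_pos ℓ with h | h
    · rw [h] at hl; omega
    · exact h
  have hkey : ∀ d a, a + d ≤ ℓ → kseq a ≤ kseq (a + d) := by
    intro d
    induction d with
    | zero => intro a _; exact le_refl _
    | succ d ih =>
      intro a h
      exact le_trans (ih a (by omega)) (le_of_lt (hmono (a + d) (by omega)))
  have hksle : ∀ a b, a ≤ b → b ≤ ℓ → kseq a ≤ kseq b := by
    intro a b hab hbl
    have := hkey (b - a) a (by omega)
    rwa [Nat.add_sub_cancel' hab] at this
  have hex : ∀ q : Fin n, ∃ j, (q : ℕ) < kseq (j + 1) :=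
    fun q => ⟨ℓ - 1, by rw [Nat.sub_add_cancel hℓ1, hl]; exact q.isLt⟩
  set blkP : Fin n → ℕ := fun q => Nat.find (hex q) with hblkPdef
  have hub : ∀ q : Fin n, (q : ℕ) < kseq (blkP q + 1) := fun q => Nat.find_spec (hex q)
  have hltℓ : ∀ q : Fin n, blkP q < ℓ := by
    intro q
    have : blkP q ≤ ℓ - 1 :=
      Nat.find_le (by rw [Nat.sub_add_cancel hℓ1, hl]; exact q.isLt)
    omega
  have hlb : ∀ q : Fin n, kseq (blkP q) ≤ (q : ℕ) := by
    intro q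
    rcases Nat.eq_zero_or_pos (blkP q) with h | h
    · rw [h, h0]; exact Nat.zero_le _
    · have hm := Nat.find_min (hex q) (m := blkP q - 1) (show blkP q - 1 < blkP q by omega)
      push_neg at hm
      have he : blkP q - 1 + 1 = blkP q := by omega
      rwa [he] at hm
  have hiff : ∀ (q : Fin n) (j), j ≤ ℓ → (blkP q < j ↔ (q : ℕ) < kseq j) := by
    intro q j hj
    constructor
    · intro h
      exact lt_of_lt_of_le (hub q) (hksle (blkP q + 1) j (by omega) hj)
    · intro h
      by_contra hc
      push_neg at hc
      have h1 := hlb q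
      have h2 := hksle j (blkP q) hc (le_of_lt (hltℓ q))
      omega
  have hblkstrict : ∀ q r : Fin n, blkP q < blkP r → (q : ℕ) < (r : ℕ) := by
    intro q r h
    calc (q : ℕ) < kseq (blkP q + 1) := hub q
      _ ≤ kseq (blkP r) := hksle _ _ (by omega) (le_of_lt (hltℓ r))
      _ ≤ r := hlb r
  set Blk : Fin n → ℕ := fun c => blkP (v₁.symm c) with hBlkdef
  have hsame : ∀ u ∈ v₁ :: V, ∀ c, blkP (u.symm c) = Blk c := by
    intro u hu c
    have hjℓ : Blk c < ℓ := hltℓ _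
    have h1 : kseq (Blk c) ≤ (v₁.symm c : ℕ) := hlb _
    have h2 : (v₁.symm c : ℕ) < kseq (Blk c + 1) := hub _
    have hc1 : c ∈ blockSet v₁ (kseq (Blk c)) (kseq (Blk c + 1)) := by
      simp only [blockSet, mem_filter, mem_univ, true_and]
      exact ⟨h1, h2⟩
    have hb := hagree (Blk c + 1) (by omega) (by omega) u hu
    simp only [Nat.add_sub_cancel] at hb
    rw [← hb] at hc1
    simp only [blockSet, mem_filter, mem_univ, true_and] at hc1
    have hA : blkP (u.symm c) < Blk c + 1 := (hiff _ (Blk c + 1) (by omega)).2 hc1.2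
    have hB : ¬ blkP (u.symm c) < Blk c :=
      fun h => absurd ((hiff _ (Blk c) (by omega)).1 h) (not_lt.2 hc1.1)
    omega
  have hvot : ∀ u ∈ v₁ :: V, ∀ a b : Fin n, Blk a < Blk b →
      (u.symm a : ℕ) < (u.symm b : ℕ) := by
    intro u hu a b h
    apply hblkstrict
    rw [hsame u hu a, hsame u hu b]
    exact h
  -- no descent in w
  have hnod : ∀ p (hp : p + 1 < n),
      Blk (w ⟨p, Nat.lt_of_succ_lt hp⟩) ≤ Blk (w ⟨p + 1, hp⟩) := by
    intro p hp
    by_contra hd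
    push_neg at hd
    set w' : Equiv.Perm (Fin n) :=
      w * Equiv.swap ⟨p, Nat.lt_of_succ_lt hp⟩ ⟨p + 1, hp⟩ with hw'def
    have hlt : ∀ u ∈ v₁ :: V,
        dTD n β (fun _ => 1) w' u < dTD n β (fun _ => 1) w u :=
      fun u hu => dTD_swap_lt n hn β hβ hβ2 Blk u w p hp (hvot u hu) hd
    have hstrict : dProf n β (fun _ => 1) w' (v₁ :: V)
        < dProf n β (fun _ => 1) w (v₁ :: V) := by
      rw [dProf, dProf, List.map_cons, List.map_cons, List.sum_cons, List.sum_cons]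
      have ht : (V.map (dTD n β (fun _ => 1) w')).sum
          ≤ (V.map (dTD n β (fun _ => 1) w)).sum := by
        apply List.sum_le_sum
        intro u hu
        exact le_of_lt (hlt u (List.mem_cons_of_mem _ hu))
      exact add_lt_add_of_lt_of_le (hlt v₁ List.mem_cons_self) ht
    exact absurd (hw w') (not_le.2 hstrict)
  -- monotonicity of Blk along positions of w
  have hmonW : ∀ R S : Fin n, R ≤ S → Blk (w R) ≤ Blk (w S) := by
    have hkey2 : ∀ b (hb : b < n) a (ha : a < n), a ≤ b →
        Blk (w ⟨a, ha⟩) ≤ Blk (w ⟨b, hb⟩) := by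
      intro b
      induction b with
      | zero =>
        intro hb a ha h
        have ha0 : a = 0 := by omega
        subst ha0
        exact le_refl _
      | succ b ih =>
        intro hb a ha h
        rcases Nat.lt_or_ge a (b + 1) with h' | h'
        · exact le_trans (ih (by omega) a ha (by omega)) (hnod b hb)
        · have hab : a = b + 1 := by omega
          subst hab
          exact le_refl _
    intro R S hRS
    have hRS' : (R : ℕ) ≤ (S : ℕ) := hRS
    have h := hkey2 (S : ℕ) S.isLt (R : ℕ) R.isLt hRS
    simpa using h
  have hcomp : ∀ a b : Fin n, (w.symm a : ℕ) ≤ (w.symm b : ℕ) → Blk a ≤ Blk b := by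
    intro a b h
    have := hmonW (w.symm a) (w.symm b) h
    rwa [Equiv.apply_symm_apply, Equiv.apply_symm_apply] at this
  -- counting
  have hcard : ∀ (σ : Equiv.Perm (Fin n)) (m : ℕ), m ≤ n →
      (Finset.univ.filter fun c : Fin n => ((σ.symm c : Fin n) : ℕ) < m).card = m := by
    intro σ m hm
    apply Finset.card_eq_of_bijective (fun i hi => σ ⟨i, lt_of_lt_of_le hi hm⟩)
    · intro a ha
      simp only [mem_filter, mem_univ, true_and] at ha
      exact ⟨(σ.symm a : ℕ), ha, by simp⟩
    · intro i hi
      simp only [mem_filter, mem_univ, true_and, Equiv.symm_apply_apply]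
      exact hi
    · intro i j hi hj hij
      have := σ.injective hij
      simpa [Fin.mk.injEq] using this
  have hAeq : ∀ j, j ≤ ℓ →
      (Finset.univ.filter fun c : Fin n => ((w.symm c : Fin n) : ℕ) < kseq j)
        = (Finset.univ.filter fun c : Fin n => ((v₁.symm c : Fin n) : ℕ) < kseq j) := by
    intro j hj
    have hm : kseq j ≤ n := by rw [← hl]; exact hksle j ℓ hj le_rfl
    have hc1 := hcard w (kseq j) hm
    have hc2 := hcard v₁ (kseq j) hm
    have hsub : (Finset.univ.filter fun c : Fin n => ((v₁.symm c : Fin n) : ℕ) < kseq j)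
        ⊆ (Finset.univ.filter fun c : Fin n => ((w.symm c : Fin n) : ℕ) < kseq j) := by
      intro c hc
      simp only [mem_filter, mem_univ, true_and] at hc ⊢
      by_contra hcA
      push_neg at hcA
      by_cases hAD : (Finset.univ.filter fun c : Fin n => ((w.symm c : Fin n) : ℕ) < kseq j)
          ⊆ (Finset.univ.filter fun c : Fin n => ((v₁.symm c : Fin n) : ℕ) < kseq j)
      · have heq := Finset.eq_of_subset_of_card_le hAD (by rw [hc1, hc2])
        have : c ∈ (Finset.univ.filter fun c : Fin n => ((w.symm c : Fin n) : ℕ) < kseq j) := by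
          rw [heq]
          simp only [mem_filter, mem_univ, true_and]
          exact hc
        simp only [mem_filter, mem_univ, true_and] at this
        omega
      · obtain ⟨b, hb1, hb2⟩ := Finset.not_subset.1 hAD
        simp only [mem_filter, mem_univ, true_and] at hb1 hb2
        push_neg at hb2
        have hcb : Blk b ≤ Blk c := hcomp b c (by omega)
        have h1 : Blk c < j := (hiff (v₁.symm c) j hj).2 hc
        have h2 : ¬ Blk b < j := fun h => absurd ((hiff (v₁.symm b) j hj).1 h) (not_lt.2 hb2)
        omega
    exact (Finset.eq_of_subset_of_card_le hsub (by rw [hc1, hc2])).symm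
  ext c
  simp only [blockSet, mem_filter, mem_univ, true_and]
  have e1 := Finset.ext_iff.1 (hAeq i hiℓ) c
  have e2 := Finset.ext_iff.1 (hAeq (i - 1) (by omega)) c
  simp only [mem_filter, mem_univ, true_and] at e1 e2
  omega
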